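/- arXiv:1404.3592 — 2 statements merged into one kernel-verified Lean document; each statement's English description precedes it below -/
import Mathlib

section
/- Suppose in addition that ‖E(t)‖_F = 1 for all t and that E solves the differential equation Ė = −S + Re⟨E,S⟩E, where S(t) = y(t) y(t)^H G(t)^H + G(t)^H x(t) x(t)^H. Then d/dt |y(t)^H x(t)| = −ε |y(t)^H x(t)| · ‖S(t) − Re⟨E(t),S(t)⟩E(t)‖_F². In particular d/dt |y^H x| = 0 at time t if and only if Ė(t) = 0. -/
open Matrix

/-- Frobenius inner product `⟨A,B⟩ = trace(Aᴴ B)`. -/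
noncomputable def frobInner {n : ℕ} (A B : Matrix (Fin n) (Fin n) ℂ) : ℂ :=
  (Aᴴ * B).trace

/-- Frobenius norm `‖A‖_F = √⟨A,A⟩`. -/
noncomputable def frobNorm {n : ℕ} (A : Matrix (Fin n) (Fin n) ℂ) : ℝ :=
  Real.sqrt (frobInner A A).re

/-- `G` is a group inverse of `M`. -/
def IsGroupInverse {n : ℕ} (M G : Matrix (Fin n) (Fin n) ℂ) : Prop :=
  M * G = G * M ∧ G * M * G = G ∧ M * G * M = M

/-- The matrix `S = y yᴴ Gᴴ + Gᴴ x xᴴ`. -/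
noncomputable def Smat {n : ℕ} (x y : Fin n → ℂ) (G : Matrix (Fin n) (Fin n) ℂ) :
    Matrix (Fin n) (Fin n) ℂ :=
  vecMulVec y (star y) * Gᴴ + Gᴴ * vecMulVec x (star x)


lemma frobInner_apply {n : ℕ} (A B : Matrix (Fin n) (Fin n) ℂ) :
    frobInner A B = ∑ i, ∑ j, star (A i j) * B i j := by
  rw [frobInner, Matrix.trace]
  simp only [Matrix.diag_apply, Matrix.mul_apply, Matrix.conjTranspose_apply]
  rw [Finset.sum_comm]

lemma frobInner_self_re {n : ℕ} (A : Matrix (Fin n) (Fin n) ℂ) :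
    (frobInner A A).re = ∑ i, ∑ j, Complex.normSq (A i j) := by
  rw [frobInner_apply]
  simp [Complex.mul_re, Complex.normSq_apply]

lemma frobInner_self_re_nonneg {n : ℕ} (A : Matrix (Fin n) (Fin n) ℂ) :
    0 ≤ (frobInner A A).re := by
  rw [frobInner_self_re]
  exact Finset.sum_nonneg fun i _ => Finset.sum_nonneg fun j _ => Complex.normSq_nonneg _

lemma frobInner_self_re_eq_zero {n : ℕ} (A : Matrix (Fin n) (Fin n) ℂ) :
    (frobInner A A).re = 0 ↔ A = 0 := by
  rw [frobInner_self_re]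
  constructor
  · intro h
    ext i j
    have h1 := (Finset.sum_eq_zero_iff_of_nonneg (fun i _ => Finset.sum_nonneg fun j _ => Complex.normSq_nonneg _)).1 h i (Finset.mem_univ i)
    have h2 := (Finset.sum_eq_zero_iff_of_nonneg (fun j _ => Complex.normSq_nonneg _)).1 h1 j (Finset.mem_univ j)
    simpa using Complex.normSq_eq_zero.1 h2
  · intro h; simp [h]

lemma sq_frobNorm {n : ℕ} (A : Matrix (Fin n) (Fin n) ℂ) :
    (frobNorm A) ^ 2 = (frobInner A A).re := by
  rw [frobNorm, Real.sq_sqrt (frobInner_self_re_nonneg A)]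

lemma trace_vecMulVec_mul {n : ℕ} (a b : Fin n → ℂ) (N : Matrix (Fin n) (Fin n) ℂ) :
    (vecMulVec a b * N).trace = b ⬝ᵥ (N *ᵥ a) := by
  rw [Matrix.trace]
  simp only [Matrix.diag_apply, Matrix.mul_apply, Matrix.vecMulVec_apply, dotProduct,
    Matrix.mulVec, Finset.mul_sum]
  rw [Finset.sum_comm]
  exact Finset.sum_congr rfl fun j _ => Finset.sum_congr rfl fun i _ => by ring

lemma vecMulVec_conjTranspose {n : ℕ} (a b : Fin n → ℂ) :
    (vecMulVec a b)ᴴ = vecMulVec (star b) (star a) := by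
  ext i j
  simp [Matrix.vecMulVec_apply, Matrix.conjTranspose_apply, mul_comm]

lemma frobInner_Smat {n : ℕ} (x y : Fin n → ℂ) (G M : Matrix (Fin n) (Fin n) ℂ) :
    frobInner (Smat x y G) M
      = star y ⬝ᵥ ((M * G) *ᵥ y) + star x ⬝ᵥ ((G * M) *ᵥ x) := by
  rw [frobInner, Smat, conjTranspose_add, conjTranspose_mul, conjTranspose_mul,
    conjTranspose_conjTranspose, vecMulVec_conjTranspose, vecMulVec_conjTranspose,
    star_star, star_star, add_mul, trace_add]
  rw [mul_assoc, Matrix.trace_mul_comm G, mul_assoc, trace_vecMulVec_mul,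
    mul_assoc, trace_vecMulVec_mul]


lemma frobInner_add_right {n : ℕ} (A B C : Matrix (Fin n) (Fin n) ℂ) :
    frobInner A (B + C) = frobInner A B + frobInner A C := by
  rw [frobInner, frobInner, frobInner, mul_add, trace_add]

lemma frobInner_neg_right {n : ℕ} (A B : Matrix (Fin n) (Fin n) ℂ) :
    frobInner A (-B) = -frobInner A B := by
  rw [frobInner, frobInner, mul_neg, trace_neg]

lemma frobInner_sub_right {n : ℕ} (A B C : Matrix (Fin n) (Fin n) ℂ) :
    frobInner A (B - C) = frobInner A B - frobInner A C := by
  rw [frobInner, frobInner, frobInner, mul_sub, trace_sub]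

lemma frobInner_sub_left {n : ℕ} (A B C : Matrix (Fin n) (Fin n) ℂ) :
    frobInner (A - B) C = frobInner A C - frobInner B C := by
  rw [frobInner, frobInner, frobInner, conjTranspose_sub, sub_mul, trace_sub]

lemma frobInner_smul_right {n : ℕ} (z : ℂ) (A B : Matrix (Fin n) (Fin n) ℂ) :
    frobInner A (z • B) = z * frobInner A B := by
  rw [frobInner, frobInner, Matrix.mul_smul, trace_smul, smul_eq_mul]

lemma frobInner_real_smul_right {n : ℕ} (r : ℝ) (A B : Matrix (Fin n) (Fin n) ℂ) :
    frobInner A (r • B) = r • frobInner A B := by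
  rw [frobInner, frobInner, Matrix.mul_smul, trace_smul]

lemma frobInner_real_smul_left {n : ℕ} (r : ℝ) (A B : Matrix (Fin n) (Fin n) ℂ) :
    frobInner (r • A) B = r • frobInner A B := by
  simp only [frobInner_apply, Matrix.smul_apply, star_smul, star_trivial, smul_mul_assoc,
    Finset.smul_sum]

lemma frobInner_conj_symm {n : ℕ} (A B : Matrix (Fin n) (Fin n) ℂ) :
    frobInner B A = starRingEnd ℂ (frobInner A B) := by
  simp only [frobInner_apply, map_sum]
  exact Finset.sum_congr rfl fun i _ => Finset.sum_congr rfl fun j _ => by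
    simp only [RingHom.coe_coe, starRingEnd_apply, StarMul.star_mul, star_star]


theorem stmt2 {n : ℕ} (hn : 2 ≤ n) (A : Matrix (Fin n) (Fin n) ℂ) (ε : ℝ) (hε : 0 < ε)
    (E E' : ℝ → Matrix (Fin n) (Fin n) ℂ)
    (x x' y y' : ℝ → (Fin n → ℂ))
    (lam lam' : ℝ → ℂ)
    (G G' : ℝ → Matrix (Fin n) (Fin n) ℂ)
    (hEdiff : ∀ t i j, HasDerivAt (fun s => E s i j) (E' t i j) t)
    (hxdiff : ∀ t i, HasDerivAt (fun s => x s i) (x' t i) t)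
    (hydiff : ∀ t i, HasDerivAt (fun s => y s i) (y' t i) t)
    (hlamdiff : ∀ t, HasDerivAt lam (lam' t) t)
    (hGdiff : ∀ t i j, HasDerivAt (fun s => G s i j) (G' t i j) t)
    (heig : ∀ t, (A + (ε : ℂ) • E t) *ᵥ x t = lam t • x t)
    (hleig : ∀ t, star (y t) ᵥ* (A + (ε : ℂ) • E t) = lam t • star (y t))
    (hxnorm : ∀ t, star (x t) ⬝ᵥ x t = 1)
    (hynorm : ∀ t, star (y t) ⬝ᵥ y t = 1)
    (hyx : ∀ t, star (y t) ⬝ᵥ x t ≠ 0)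
    (hG : ∀ t, IsGroupInverse (A + (ε : ℂ) • E t - lam t • 1) (G t))
    (hGx : ∀ t, G t *ᵥ x t = 0)
    (hyG : ∀ t, star (y t) ᵥ* G t = 0)
    (hx' : ∀ t, x' t =
      (star (x t) ⬝ᵥ (G t *ᵥ (((ε : ℂ) • E' t) *ᵥ x t))) • x t
        - G t *ᵥ (((ε : ℂ) • E' t) *ᵥ x t))
    (hy' : ∀ t, star (y' t) =
      (star (y t) ⬝ᵥ ((((ε : ℂ) • E' t) * G t) *ᵥ y t)) • star (y t)
        - star (y t) ᵥ* (((ε : ℂ) • E' t) * G t))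
    (hEnorm : ∀ t, frobNorm (E t) = 1)
    (hODE : ∀ t, E' t = -(Smat (x t) (y t) (G t))
        + (frobInner (E t) (Smat (x t) (y t) (G t))).re • E t) :
    ∀ t, HasDerivAt (fun s => ‖star (y s) ⬝ᵥ x s‖)
        (-(ε * ‖star (y t) ⬝ᵥ x t‖) *
          frobNorm (Smat (x t) (y t) (G t)
            - (frobInner (E t) (Smat (x t) (y t) (G t))).re • E t) ^ 2) t
      ∧ ((-(ε * ‖star (y t) ⬝ᵥ x t‖) *
          frobNorm (Smat (x t) (y t) (G t)
            - (frobInner (E t) (Smat (x t) (y t) (G t))).re • E t) ^ 2 = 0)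
          ↔ E' t = 0) := by
  intro t
  have hfne : star (y t) ⬝ᵥ x t ≠ 0 := hyx t
  set St := Smat (x t) (y t) (G t) with hSt
  set α : ℝ := (frobInner (E t) St).re with hα
  set T : Matrix (Fin n) (Fin n) ℂ := St - α • E t with hT
  set c : ℂ := frobInner St ((ε : ℂ) • E' t) with hc
  -- E' t = -T
  have hE'T : E' t = -T := by
    rw [hODE t, hT, neg_sub]
    rw [sub_eq_neg_add]
  -- Frobenius facts
  have hEE : (frobInner (E t) (E t)).re = 1 := by
    have h1 := hEnorm t
    rw [frobNorm] at h1
    have := Real.sq_sqrt (frobInner_self_re_nonneg (E t))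
    rw [h1] at this
    simpa using this.symm
  have hSE : (frobInner St (E t)).re = α := by
    rw [frobInner_conj_symm, Complex.conj_re, hα]
  -- ⟨T,T⟩.re = σ - α²
  have hTT : (frobInner T T).re = (frobInner St St).re - α ^ 2 := by
    simp only [hT, frobInner_sub_left, frobInner_sub_right, frobInner_real_smul_left,
      frobInner_real_smul_right, Complex.real_smul, Complex.sub_re, Complex.mul_re,
      Complex.mul_im, Complex.ofReal_re, Complex.ofReal_im, hSE, hEE, ← hα]
    ring
  -- derivative of f
  have hfd : HasDerivAt (fun s => star (y s) ⬝ᵥ x s)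
      (star (y' t) ⬝ᵥ x t + star (y t) ⬝ᵥ x' t) t := by
    have h := HasDerivAt.sum (x := t) (u := Finset.univ)
      (A := fun i s => star (y s i) * x s i)
      (A' := fun i => star (y' t i) * x t i + star (y t i) * x' t i)
      (fun i _ => ((hydiff t i).star.mul (hxdiff t i)))
    have he1 : (fun s => star (y s) ⬝ᵥ x s) = fun s => ∑ i, star (y s i) * x s i := by
      funext s; simp [dotProduct]
    rw [he1]
    convert h using 1
    case e'_4 => rfl
    case e'_8 => funext s; simp [Finset.sum_apply]
    rw [Finset.sum_add_distrib]
    simp [dotProduct]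
  -- rewrite derivative as c * f
  have hval : star (y' t) ⬝ᵥ x t + star (y t) ⬝ᵥ x' t = c * (star (y t) ⬝ᵥ x t) := by
    have hMx : (((ε : ℂ) • E' t) * G t) *ᵥ x t = 0 := by
      rw [← Matrix.mulVec_mulVec, hGx t, Matrix.mulVec_zero]
    have h1 : star (y' t) ⬝ᵥ x t
        = (star (y t) ⬝ᵥ ((((ε : ℂ) • E' t) * G t) *ᵥ y t)) * (star (y t) ⬝ᵥ x t) := by
      rw [hy' t, sub_dotProduct, smul_dotProduct, smul_eq_mul,
        ← Matrix.dotProduct_mulVec, hMx, dotProduct_zero, sub_zero]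
    have h2 : star (y t) ⬝ᵥ x' t
        = (star (x t) ⬝ᵥ (G t *ᵥ (((ε : ℂ) • E' t) *ᵥ x t))) * (star (y t) ⬝ᵥ x t) := by
      rw [hx' t, dotProduct_sub, dotProduct_smul, smul_eq_mul,
        Matrix.dotProduct_mulVec (star (y t)) (G t), hyG t, zero_dotProduct, sub_zero]
    rw [h1, h2, hc, frobInner_Smat, Matrix.mulVec_mulVec]
    ring
  rw [hval] at hfd
  -- real part of c
  have hcre : c.re = ε * (α ^ 2 - (frobInner St St).re) := by
    rw [hc, frobInner_smul_right, hODE t, ← hSt, ← hα, frobInner_add_right,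
      frobInner_neg_right, frobInner_real_smul_right]
    simp only [Complex.real_smul, Complex.mul_re, Complex.mul_im, Complex.add_re,
      Complex.add_im, Complex.neg_re, Complex.neg_im, Complex.ofReal_re, Complex.ofReal_im,
      hSE]
    ring
  -- squared frobenius norm of T
  have hTnorm : frobNorm T ^ 2 = (frobInner St St).re - α ^ 2 := by
    rw [sq_frobNorm, hTT]
  -- the target value
  have hvaleq : -(ε * ‖star (y t) ⬝ᵥ x t‖) * frobNorm T ^ 2
      = c.re * ‖star (y t) ⬝ᵥ x t‖ := by
    rw [hTnorm, hcre]; ring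
  -- derivative of |f|
  have habspos : 0 < ‖star (y t) ⬝ᵥ x t‖ := by
    exact norm_pos_iff.mpr hfne
  have habs : HasDerivAt (fun s => ‖star (y s) ⬝ᵥ x s‖)
      (c.re * ‖star (y t) ⬝ᵥ x t‖) t := by
    set f : ℝ → ℂ := fun s => star (y s) ⬝ᵥ x s with hfdef
    set d : ℂ := c * (star (y t) ⬝ᵥ x t) with hd
    have hre : HasDerivAt (fun s => (f s).re) d.re t :=
      Complex.reCLM.hasFDerivAt.comp_hasDerivAt t hfd
    have him : HasDerivAt (fun s => (f s).im) d.im t :=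
      Complex.imCLM.hasFDerivAt.comp_hasDerivAt t hfd
    have hg : HasDerivAt (fun s => (f s).re * (f s).re + (f s).im * (f s).im)
        ((d.re * (f t).re + (f t).re * d.re) + (d.im * (f t).im + (f t).im * d.im)) t :=
      (hre.mul hre).add (him.mul him)
    have hgt : (f t).re * (f t).re + (f t).im * (f t).im = Complex.normSq (f t) := by
      rw [Complex.normSq_apply]
    have hgne : (f t).re * (f t).re + (f t).im * (f t).im ≠ 0 := by
      rw [hgt]
      exact (Complex.normSq_pos.mpr hfne).ne'
    have hsqrt := (Real.hasDerivAt_sqrt hgne).comp t hg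
    have heq : (fun s => ‖star (y s) ⬝ᵥ x s‖)
        = (fun s => Real.sqrt ((f s).re * (f s).re + (f s).im * (f s).im)) := by
      funext s
      rw [Complex.norm_def, Complex.normSq_apply]
    rw [heq]
    convert hsqrt using 1
    case e'_4 => rfl
    case e'_5 => rfl
    case e'_8 => rfl
    have hs : Real.sqrt ((f t).re * (f t).re + (f t).im * (f t).im) = ‖f t‖ := by
      rw [hgt, Complex.norm_def]
    rw [hs]
    have hdre : d.re = c.re * (f t).re - c.im * (f t).im := by
      rw [hd, Complex.mul_re]
    have hdim : d.im = c.re * (f t).im + c.im * (f t).re := by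
      rw [hd, Complex.mul_im]
    rw [hdre, hdim]
    have habssq : ‖f t‖ ^ 2 = (f t).re * (f t).re + (f t).im * (f t).im := by
      rw [← Complex.normSq_apply, ← Complex.sq_norm]
    have habne : ‖f t‖ ≠ 0 := ne_of_gt habspos
    have habs2 : ‖star (y t) ⬝ᵥ x t‖ = ‖f t‖ := rfl
    rw [habs2]
    field_simp
    linear_combination (2 * c.re) * habssq
  constructor
  · rw [hvaleq]
    exact habs
  · constructor
    · intro h
      have hN : frobNorm T ^ 2 = 0 := by
        have hne : -(ε * ‖star (y t) ⬝ᵥ x t‖) ≠ 0 := by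
          simp only [neg_ne_zero]
          exact mul_ne_zero hε.ne' habspos.ne'
        exact (mul_eq_zero.1 h).resolve_left hne
      have hTz : T = 0 := by
        rw [hTnorm] at hN
        rw [← frobInner_self_re_eq_zero, hTT, hN]
      rw [hE'T, hTz, neg_zero]
    · intro h
      have hTz : T = 0 := by
        rw [hE'T] at h
        exact neg_eq_zero.1 h
      rw [hTz]
      have : frobNorm (0 : Matrix (Fin n) (Fin n) ℂ) = 0 := by
        rw [frobNorm, (frobInner_self_re_eq_zero (0 : Matrix (Fin n) (Fin n) ℂ)).2 rfl, Real.sqrt_zero]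
      rw [this]
      ring
end

section
/- Fix A ∈ ℂ^{n×n} and ε > 0. Let U, V ∈ ℂ^{n×2} have orthonormal columns, T ∈ ℂ^{2×2} be invertible, E = U T V^H with ‖E‖_F = 1. Let λ ∈ ℂ, which is NOT an eigenvalue of A, let x, y ∈ ℂ^n be unit vectors with (A+εE)x = λx, y^H(A+εE) = λ y^H, y^H x ≠ 0 and |y^H x| < 1, suppose rank(A+εE−λI) = n−1, and let G be a group inverse of A+εE−λI. Set S = y y^H G^H + G^H x x^H and P_E(Z) = Z − (I − UU^H) Z (I − VV^H). If E is a stationary point of the projected flow, i.e. P_E(S) = Re⟨E,S⟩E, then E = μ S for some real number μ. In particular the stationary points of the projected rank-2 flow coincide with those of the unprojected flow. -/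
open Matrix

/-- Orthogonal projection onto the tangent space of the rank-2 manifold at `E = U T Vᴴ`:
`P_E(Z) = Z − (I − UUᴴ) Z (I − VVᴴ)`. -/
noncomputable def PE {n : ℕ} (U V : Matrix (Fin n) (Fin 2) ℂ) (Z : Matrix (Fin n) (Fin n) ℂ) :
    Matrix (Fin n) (Fin n) ℂ :=
  Z - (1 - U * Uᴴ) * Z * (1 - V * Vᴴ)

lemma vecMulVec_mulVec' {n : ℕ} (a b v : Fin n → ℂ) :
    vecMulVec a b *ᵥ v = (b ⬝ᵥ v) • a := by
  funext i
  simp [Matrix.vecMulVec, Matrix.mulVec, dotProduct, Finset.mul_sum,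
    mul_assoc, mul_comm, mul_left_comm]

lemma real_smul_matrix {n : ℕ} (r : ℝ) (X : Matrix (Fin n) (Fin n) ℂ) :
    r • X = (r : ℂ) • X := by
  ext i j
  simp [Complex.real_smul]

lemma finrank_span_singleton_le' (v : Fin 2 → ℂ) :
    ∀ w : Fin 2 → ℂ, True := fun _ => trivial

lemma finrank_span_le_one {V : Type*} [AddCommGroup V] [Module ℂ V] (v : V) :
    Module.finrank ℂ (Submodule.span ℂ {v} : Submodule ℂ V) ≤ 1 := by
  by_cases hv : v = 0
  · subst hv
    rw [Submodule.span_zero_singleton]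
    simp
  · rw [finrank_span_singleton hv]

theorem stmt9 {n : ℕ} (A : Matrix (Fin n) (Fin n) ℂ) (ε : ℝ) (hε : 0 < ε)
    (U V : Matrix (Fin n) (Fin 2) ℂ) (T : Matrix (Fin 2) (Fin 2) ℂ)
    (hU : Uᴴ * U = 1) (hV : Vᴴ * V = 1) (hT : IsUnit T)
    (E : Matrix (Fin n) (Fin n) ℂ) (hE : E = U * T * Vᴴ)
    (hEnorm : frobNorm E = 1)
    (lam : ℂ) (hlam : ∀ v : Fin n → ℂ, A *ᵥ v = lam • v → v = 0)
    (x y : Fin n → ℂ)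
    (hxnorm : star x ⬝ᵥ x = 1) (hynorm : star y ⬝ᵥ y = 1)
    (heig : (A + (ε : ℂ) • E) *ᵥ x = lam • x)
    (hleig : star y ᵥ* (A + (ε : ℂ) • E) = lam • star y)
    (hyx : star y ⬝ᵥ x ≠ 0)
    (hyx1 : ‖star y ⬝ᵥ x‖ < 1)
    (hrank : (A + (ε : ℂ) • E - lam • 1).rank = n - 1)
    (G : Matrix (Fin n) (Fin n) ℂ)
    (hG : IsGroupInverse (A + (ε : ℂ) • E - lam • 1) G)
    (hstat : PE U V (Smat x y G) = (frobInner E (Smat x y G)).re • E) :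
    ∃ μ : ℝ, E = μ • Smat x y G := by
  classical
  have hn : 0 < n := by
    rcases Nat.eq_zero_or_pos n with h | h
    · subst h; simp [dotProduct] at hxnorm
    · exact h
  have hx0 : x ≠ 0 := by
    intro h; rw [h] at hxnorm; simp at hxnorm
  set M : Matrix (Fin n) (Fin n) ℂ := A + (ε : ℂ) • E - lam • 1 with hMdef
  set S : Matrix (Fin n) (Fin n) ℂ := Smat x y G with hSdef
  set c : ℝ := (frobInner E S).re with hcdef
  obtain ⟨hcomm, hGMG, hMGM⟩ := hG
  -- eigen relations
  have hMx : M *ᵥ x = 0 := by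
    rw [hMdef, Matrix.sub_mulVec, heig, Matrix.smul_mulVec, Matrix.one_mulVec]
    simp
  have hyM : star y ᵥ* M = 0 := by
    have h1 : star y ᵥ* (lam • (1 : Matrix (Fin n) (Fin n) ℂ)) = lam • star y := by
      funext j
      simp [Matrix.vecMul, dotProduct, Matrix.one_apply, mul_comm]
    rw [hMdef, Matrix.vecMul_sub, hleig, h1, sub_self]
  -- kernel of M is the span of x
  have hker : LinearMap.ker M.mulVecLin = Submodule.span ℂ {x} := by
    have hxmem : x ∈ LinearMap.ker M.mulVecLin := by
      simpa [Matrix.mulVecLin_apply] using hMx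
    have hle : Submodule.span ℂ {x} ≤ LinearMap.ker M.mulVecLin := by
      rwa [Submodule.span_singleton_le_iff_mem]
    have hrr : Module.finrank ℂ (LinearMap.range M.mulVecLin) = n - 1 := hrank
    have hsum := LinearMap.finrank_range_add_finrank_ker M.mulVecLin
    rw [Module.finrank_fin_fun] at hsum
    have hk1 : Module.finrank ℂ (LinearMap.ker M.mulVecLin) = 1 := by omega
    refine (Submodule.eq_of_le_of_finrank_le hle ?_).symm
    rw [hk1, finrank_span_singleton hx0]
  -- the key impossibility: star x ᵥ* (M * G) cannot vanish
  have hcore : star x ᵥ* (M * G) ≠ 0 := by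
    intro hxMG
    set P : Matrix (Fin n) (Fin n) ℂ := 1 - M * G with hPdef
    have hMP : M * P = 0 := by
      have h1 : M * (M * G) = M := by
        rw [hcomm, ← Matrix.mul_assoc, hMGM]
      rw [hPdef, Matrix.mul_sub, Matrix.mul_one, h1, sub_self]
    have hPcol : ∀ j, ∃ w : ℂ, (fun i => P i j) = w • x := by
      intro j
      have hmem : (fun i => P i j) ∈ LinearMap.ker M.mulVecLin := by
        have h0 : M *ᵥ (P *ᵥ Pi.single j 1) = 0 := by
          rw [Matrix.mulVec_mulVec, hMP, Matrix.zero_mulVec]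
        have h1 : P *ᵥ Pi.single j 1 = fun i => P i j := by
          simp [Matrix.mulVec_single]; rfl
        rw [h1] at h0
        simpa [Matrix.mulVecLin_apply] using h0
      rw [hker, Submodule.mem_span_singleton] at hmem
      obtain ⟨w, hw⟩ := hmem
      exact ⟨w, hw.symm⟩
    have hyP : star y ᵥ* P = star y := by
      rw [hPdef, Matrix.vecMul_sub, Matrix.vecMul_one, ← Matrix.vecMul_vecMul, hyM,
        Matrix.zero_vecMul, sub_zero]
    have hxP : star x ᵥ* P = star x := by
      rw [hPdef, Matrix.vecMul_sub, Matrix.vecMul_one, hxMG, sub_zero]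
    -- deduce star y = s • star x entrywise
    have hrel : ∀ j, star (y j) = (star y ⬝ᵥ x) * star (x j) := by
      intro j
      obtain ⟨w, hw⟩ := hPcol j
      have hcol : ∀ v : Fin n → ℂ, (v ᵥ* P) j = v ⬝ᵥ (fun i => P i j) := by
        intro v; simp [Matrix.vecMul, dotProduct]
      have h1 : star (y j) = w * (star y ⬝ᵥ x) := by
        have := hcol (star y)
        rw [hyP, hw, dotProduct_smul, smul_eq_mul] at this
        exact this
      have h2 : star (x j) = w := by
        have := hcol (star x)
        rw [hxP, hw, dotProduct_smul, smul_eq_mul, hxnorm, mul_one] at this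
        exact this
      rw [h1, h2]; ring
    -- contradiction with |yᴴx| < 1
    have habs : (1 : ℂ) = (star y ⬝ᵥ x) * star (star y ⬝ᵥ x) := by
      rw [← hynorm]
      have e1 : star y ⬝ᵥ y = ∑ j, star (y j) * y j := by
        simp [dotProduct]
      have e2 : star (star y ⬝ᵥ x) = ∑ j, star (x j) * y j := by
        simp [dotProduct, star_sum, mul_comm]
      rw [e1, e2, Finset.mul_sum]
      refine Finset.sum_congr rfl fun j _ => ?_
      rw [hrel j]; ring
    have habs2 : ‖star y ⬝ᵥ x‖ ^ 2 = 1 := by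
      rw [Complex.sq_norm]
      have h := habs.symm
      rw [Complex.star_def, Complex.mul_conj] at h
      exact_mod_cast h
    nlinarith [norm_nonneg (star y ⬝ᵥ x)]
  -- Gᴴx is not a multiple of y
  have hnoty : ∀ α : ℂ, Gᴴ *ᵥ x ≠ α • y := by
    intro α hGx
    apply hcore
    have hxG : star x ᵥ* G = star α • star y := by
      have h1 : star x ᵥ* G = star (Gᴴ *ᵥ x) := by
        rw [Matrix.star_mulVec, Matrix.conjTranspose_conjTranspose]
      rw [h1, hGx, star_smul]
    rw [hcomm, ← Matrix.vecMul_vecMul, hxG, Matrix.smul_vecMul, hyM, smul_zero]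
  -- consequences of stationarity
  have hVV0 : (1 - V * Vᴴ) * (V * Vᴴ) = 0 := by
    rw [Matrix.sub_mul, Matrix.one_mul]
    have h1 : V * Vᴴ * (V * Vᴴ) = V * Vᴴ := by
      rw [Matrix.mul_assoc, ← Matrix.mul_assoc Vᴴ V Vᴴ, hV, Matrix.one_mul]
    rw [h1, sub_self]
  have hUU0 : (U * Uᴴ) * (1 - U * Uᴴ) = 0 := by
    rw [Matrix.mul_sub, Matrix.mul_one]
    have h1 : U * Uᴴ * (U * Uᴴ) = U * Uᴴ := by
      rw [Matrix.mul_assoc, ← Matrix.mul_assoc Uᴴ U Uᴴ, hU, Matrix.one_mul]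
    rw [h1, sub_self]
  have hEVV : E * (V * Vᴴ) = E := by
    rw [hE, Matrix.mul_assoc, ← Matrix.mul_assoc Vᴴ V Vᴴ, hV, Matrix.one_mul]
  have hUUE : (U * Uᴴ) * E = E := by
    rw [hE, ← Matrix.mul_assoc, ← Matrix.mul_assoc, Matrix.mul_assoc U Uᴴ U, hU,
      Matrix.mul_one]
  have hstat' : S - (1 - U * Uᴴ) * S * (1 - V * Vᴴ) = (c : ℂ) • E := by
    rw [← real_smul_matrix]
    exact hstat
  have hSV : S * (V * Vᴴ) = (c : ℂ) • E := by
    have h := congrArg (fun Z => Z * (V * Vᴴ)) hstat'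
    rw [Matrix.sub_mul, Matrix.mul_assoc ((1 - U * Uᴴ) * S), hVV0, Matrix.mul_zero,
      sub_zero, smul_mul_assoc, hEVV] at h
    exact h
  have hUS : (U * Uᴴ) * S = (c : ℂ) • E := by
    have h := congrArg (fun Z => (U * Uᴴ) * Z) hstat'
    rw [Matrix.mul_sub, ← Matrix.mul_assoc (U * Uᴴ), ← Matrix.mul_assoc (U * Uᴴ), hUU0,
      Matrix.zero_mul, Matrix.zero_mul, sub_zero, mul_smul_comm, hUUE] at h
    exact h
  -- mulVec formula for S
  have hSmul : ∀ v, S *ᵥ v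
      = (star y ⬝ᵥ (Gᴴ *ᵥ v)) • y + (star x ⬝ᵥ v) • (Gᴴ *ᵥ x) := by
    intro v
    rw [hSdef, Smat, Matrix.add_mulVec, ← Matrix.mulVec_mulVec, vecMulVec_mulVec',
      ← Matrix.mulVec_mulVec, vecMulVec_mulVec', Matrix.mulVec_smul]
  by_cases hc : c = 0
  · -- contradiction branch
    exfalso
    have hSV0 : S * V = 0 := by
      have h1 : S * ((V * Vᴴ) * V) = S * V := by
        rw [Matrix.mul_assoc V Vᴴ V, hV, Matrix.mul_one]
      rw [← h1, ← Matrix.mul_assoc, hSV, hc]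
      simp
    have hxV : ∀ k, star x ⬝ᵥ (fun i => V i k) = 0 := by
      intro k
      have h0 : S *ᵥ (fun i => V i k) = 0 := by
        have h1 : (S * V) *ᵥ Pi.single k 1 = 0 := by rw [hSV0, Matrix.zero_mulVec]
        rw [← Matrix.mulVec_mulVec] at h1
        have h2 : V *ᵥ Pi.single k 1 = fun i => V i k := by
          simp [Matrix.mulVec_single]; rfl
        rwa [h2] at h1
      rw [hSmul] at h0
      set a := star y ⬝ᵥ (Gᴴ *ᵥ fun i => V i k) with ha
      set b := star x ⬝ᵥ (fun i => V i k) with hb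
      by_contra hbne
      apply hnoty (-a / b)
      have h1 : b • (Gᴴ *ᵥ x) = -(a • y) := by
        rw [add_comm] at h0
        exact add_eq_zero_iff_eq_neg.mp h0
      calc Gᴴ *ᵥ x = (b⁻¹ * b) • (Gᴴ *ᵥ x) := by
            rw [inv_mul_cancel₀ hbne, one_smul]
        _ = b⁻¹ • (b • (Gᴴ *ᵥ x)) := by rw [mul_smul]
        _ = b⁻¹ • (-(a • y)) := by rw [h1]
        _ = (-a / b) • y := by
            rw [smul_neg, smul_smul, ← neg_smul, neg_div, div_eq_inv_mul]
    have hVHx : Vᴴ *ᵥ x = 0 := by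
      funext k
      have := congrArg star (hxV k)
      simpa [Matrix.mulVec, dotProduct, Matrix.conjTranspose_apply, star_sum,
        mul_comm] using this
    have hEx : E *ᵥ x = 0 := by
      rw [hE, ← Matrix.mulVec_mulVec, hVHx, Matrix.mulVec_zero]
    have hAx : A *ᵥ x = lam • x := by
      rw [← heig, Matrix.add_mulVec, Matrix.smul_mulVec, hEx, smul_zero, add_zero]
    exact hx0 (hlam x hAx)
  · -- main branch
    have hcC : (c : ℂ) ≠ 0 := by exact_mod_cast hc
    -- the span W = span{y, Gᴴx}
    set g : Fin n → ℂ := Gᴴ *ᵥ x with hg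
    set W : Submodule ℂ (Fin n → ℂ) := (Submodule.span ℂ {y}) ⊔ (Submodule.span ℂ {g})
      with hW
    have hSW : ∀ v, S *ᵥ v ∈ W := by
      intro v
      rw [hSmul]
      exact add_mem
        (Submodule.mem_sup_left (Submodule.smul_mem _ _ (Submodule.mem_span_singleton_self y)))
        (Submodule.mem_sup_right (Submodule.smul_mem _ _ (Submodule.mem_span_singleton_self g)))
    have hWle : Module.finrank ℂ W ≤ 2 := by
      refine le_trans (Submodule.finrank_add_le_finrank_add_finrank _ _) ?_
      have := finrank_span_le_one (V := Fin n → ℂ) y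
      have := finrank_span_le_one (V := Fin n → ℂ) g
      omega
    -- range of E
    have hREle : LinearMap.range E.mulVecLin ≤ W := by
      rintro v ⟨w, rfl⟩
      have h1 : S *ᵥ ((V * Vᴴ) *ᵥ w) = (c : ℂ) • (E *ᵥ w) := by
        rw [Matrix.mulVec_mulVec, hSV, Matrix.smul_mulVec]
      have h2 : E.mulVecLin w = (c : ℂ)⁻¹ • (S *ᵥ ((V * Vᴴ) *ᵥ w)) := by
        rw [h1, Matrix.mulVecLin_apply, inv_smul_smul₀ hcC]
      rw [h2]
      exact Submodule.smul_mem _ _ (hSW _)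
    have hEU : ∀ w, ∃ u, E *ᵥ w = U *ᵥ u := by
      intro w
      exact ⟨(T * Vᴴ) *ᵥ w, by rw [Matrix.mulVec_mulVec, ← Matrix.mul_assoc, ← hE]⟩
    have hUinj : Function.Injective U.mulVecLin := by
      intro a b hab
      have h1 := congrArg (fun v => Uᴴ *ᵥ v) hab
      simpa [Matrix.mulVecLin_apply, Matrix.mulVec_mulVec, hU, Matrix.one_mulVec] using h1
    have hrangeEU : LinearMap.range E.mulVecLin = LinearMap.range U.mulVecLin := by
      apply le_antisymm
      · rintro v ⟨w, rfl⟩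
        obtain ⟨u, hu⟩ := hEU w
        exact ⟨u, by rw [Matrix.mulVecLin_apply, ← hu, Matrix.mulVecLin_apply]⟩
      · rintro v ⟨u, rfl⟩
        obtain ⟨Ti, hTi⟩ := hT.exists_right_inv
        refine ⟨V *ᵥ (Ti *ᵥ u), ?_⟩
        have hEV' : E * V = U * T := by
          rw [hE, Matrix.mul_assoc, hV, Matrix.mul_one]
        rw [Matrix.mulVecLin_apply, Matrix.mulVecLin_apply, Matrix.mulVec_mulVec,
          Matrix.mulVec_mulVec, hEV', Matrix.mul_assoc, hTi, Matrix.mul_one]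
    have hRE2 : Module.finrank ℂ (LinearMap.range E.mulVecLin) = 2 := by
      rw [hrangeEU, LinearMap.finrank_range_of_inj hUinj, Module.finrank_fin_fun]
    have hWRE : LinearMap.range E.mulVecLin = W :=
      Submodule.eq_of_le_of_finrank_le hREle (by rw [hRE2]; exact hWle)
    -- columns of S are fixed by U Uᴴ
    have hfix : ∀ v, (U * Uᴴ) *ᵥ (S *ᵥ v) = S *ᵥ v := by
      intro v
      have hmem : S *ᵥ v ∈ LinearMap.range E.mulVecLin := by rw [hWRE]; exact hSW v
      obtain ⟨w, hw⟩ := hmem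
      obtain ⟨u, hu⟩ := hEU w
      rw [Matrix.mulVecLin_apply, hu] at hw
      rw [← hw, Matrix.mulVec_mulVec, Matrix.mul_assoc U Uᴴ U, hU, Matrix.mul_one]
    have hSc : S = (c : ℂ) • E := by
      ext i j
      have h1 : ((U * Uᴴ) * S) *ᵥ Pi.single j 1 = ((c : ℂ) • E) *ᵥ Pi.single j 1 := by
        rw [hUS]
      rw [← Matrix.mulVec_mulVec, hfix] at h1
      have h2 := congrFun h1 i
      simpa [Matrix.mulVec_single, Matrix.smul_mulVec] using h2
    refine ⟨c⁻¹, ?_⟩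
    ext i j
    have h1 : S i j = (c : ℂ) * E i j := by rw [hSc]; simp
    have : (c⁻¹ • S) i j = ((c : ℝ)⁻¹ : ℂ) * S i j := by
      simp [Complex.real_smul]
    rw [this, h1]
    push_cast
    field_simp
end
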